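/- Let M and N be free modules of rank n over a commutative ring R. The map sending a symmetric tensor φ₁⊗⋯⊗φ_n ∈ Sym_n(Hom(M,N)) to the homomorphism ∧ⁿM → ∧ⁿN given by m₁∧⋯∧m_n ↦ φ₁(m₁)∧⋯∧φ_n(m_n) is a well-defined R-linear map, and its evaluation on the diagonal element φ⊗⋯⊗φ equals the map m₁∧⋯∧m_n ↦ φ(m₁)∧⋯∧φ(m_n), i.e., the determinant of φ. -/

import Mathlib

open Module
open scoped TensorProduct

/-- The submodule `Sym_n M` of symmetric tensors in the `n`-fold tensor power of `M`. -/
def symTensors (R : Type*) [CommRing R] (n : ℕ) (M : Type*) [AddCommGroup M] [Module R M] :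
    Submodule R (⨂[R]^n M) where
  carrier := {x | ∀ σ : Equiv.Perm (Fin n),
    PiTensorProduct.reindex R (fun _ : Fin n => M) σ x = x}
  add_mem' := fun hx hy σ => by rw [map_add, hx σ, hy σ]
  zero_mem' := fun σ => by simp
  smul_mem' := fun r x hx σ => by rw [map_smul, hx σ]

/-- The wedge product of a `Fin n`-family, as an element of the `n`-th exterior power. -/
noncomputable def wedgePure (R : Type*) [CommRing R] {M : Type*} [AddCommGroup M] [Module R M]
    (n : ℕ) (m : Fin n → M) : ⋀[R]^n M :=
  ⟨ExteriorAlgebra.ιMulti R n m, ExteriorAlgebra.ιMulti_range R n (Set.mem_range_self m)⟩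

section aux
variable (R : Type*) [CommRing R] (n : ℕ) {M N : Type*} [AddCommGroup M] [Module R M]
  [AddCommGroup N] [Module R N]

/-- `ιMulti` as an alternating map into the exterior power submodule. -/
noncomputable def wedgeAlt : M [⋀^Fin n]→ₗ[R] (⋀[R]^n M) :=
  { toMultilinearMap := (ExteriorAlgebra.ιMulti R n (M := M)).toMultilinearMap.codRestrict
      (⋀[R]^n M) (fun m => ExteriorAlgebra.ιMulti_range R n (Set.mem_range_self m))
    map_eq_zero_of_eq' := fun v i j h hij => Subtype.ext <| by
      simpa using (ExteriorAlgebra.ιMulti R n).map_eq_zero_of_eq v h hij }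

@[simp] lemma wedgeAlt_apply (m : Fin n → M) : wedgeAlt R n m = wedgePure R n m := rfl

noncomputable def wedgeQuot : (⨂[R]^n M) →ₗ[R] (⋀[R]^n M) :=
  PiTensorProduct.lift (wedgeAlt R n).toMultilinearMap

@[simp] lemma wedgeQuot_tprod (m : Fin n → M) :
    wedgeQuot R n (PiTensorProduct.tprod R m) = wedgePure R n m := by
  simp [wedgeQuot]

noncomputable def detAux : (⨂[R]^n (M →ₗ[R] N)) →ₗ[R] (⨂[R]^n M) →ₗ[R] (⋀[R]^n N) :=
  (LinearMap.llcomp R _ _ _ (wedgeQuot R n)).comp PiTensorProduct.piTensorHomMap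

@[simp] lemma detAux_tprod_tprod (φ : Fin n → (M →ₗ[R] N)) (m : Fin n → M) :
    detAux R n (PiTensorProduct.tprod R φ) (PiTensorProduct.tprod R m)
      = wedgePure R n (fun i => φ i (m i)) := by
  simp [detAux]

end aux

section coords
variable (R : Type*) [CommRing R] (n : ℕ) {P : Type*} [AddCommGroup P] [Module R P]
  {ι : Type*} [Fintype ι] [DecidableEq ι] (b : Basis ι R P)

/-- The coordinate functional on the `n`-th tensor power associated to a word `w` in the basis. -/
noncomputable def coordT (w : Fin n → ι) : (⨂[R]^n P) →ₗ[R] R :=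
  PiTensorProduct.lift ((MultilinearMap.mkPiAlgebra R (Fin n) R).compLinearMap
    (fun i => b.coord (w i)))

@[simp] lemma coordT_tprod (w : Fin n → ι) (f : Fin n → P) :
    coordT R n b w (PiTensorProduct.tprod R f) = ∏ i, b.repr (f i) (w i) := by
  simp [coordT, Basis.coord]

lemma tprod_decomposition (f : Fin n → P) :
    (PiTensorProduct.tprod R f : ⨂[R]^n P)
      = ∑ w : Fin n → ι, (∏ i, b.repr (f i) (w i)) •
          PiTensorProduct.tprod R (fun i => b (w i)) := by
  calc (PiTensorProduct.tprod R f : ⨂[R]^n P)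
      = PiTensorProduct.tprod R (fun i => ∑ k : ι, b.repr (f i) k • b k) := by
        congr 1; exact funext fun i => (b.sum_repr (f i)).symm
    _ = ∑ w : Fin n → ι, PiTensorProduct.tprod R (fun i => b.repr (f i) (w i) • b (w i)) :=
        (PiTensorProduct.tprod R).map_sum _
    _ = ∑ w : Fin n → ι, (∏ i, b.repr (f i) (w i)) •
          PiTensorProduct.tprod R (fun i => b (w i)) := by
        refine Finset.sum_congr rfl fun w _ => ?_
        exact (PiTensorProduct.tprod R).map_smul_univ _ _

lemma tensor_decomposition (x : ⨂[R]^n P) :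
    x = ∑ w : Fin n → ι, coordT R n b w x • PiTensorProduct.tprod R (fun i => b (w i)) := by
  induction x using PiTensorProduct.induction_on with
  | smul_tprod r f =>
    simp only [map_smul, smul_eq_mul]
    conv_lhs => rw [tprod_decomposition R n b f]
    rw [Finset.smul_sum]
    refine Finset.sum_congr rfl fun w _ => ?_
    simp [smul_smul]
  | add x y hx hy =>
    simp only [map_add, LinearMap.add_apply, add_smul, Finset.sum_add_distrib]
    rw [← hx, ← hy]

lemma coordT_reindex (τ : Equiv.Perm (Fin n)) (w : Fin n → ι) (x : ⨂[R]^n P) :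
    coordT R n b w (PiTensorProduct.reindex R (fun _ : Fin n => P) τ x)
      = coordT R n b (w ∘ τ) x := by
  induction x using PiTensorProduct.induction_on with
  | smul_tprod r f =>
    rw [map_smul, map_smul, map_smul, PiTensorProduct.reindex_tprod]
    congr 1
    simp only [coordT_tprod]
    calc (∏ i, b.repr (f (τ.symm i)) (w i))
        = ∏ i, b.repr (f (τ.symm (τ i))) (w (τ i)) := (Equiv.prod_comp τ _).symm
      _ = ∏ i, b.repr (f i) (w (τ i)) := by simp
  | add x y hx hy => simp only [map_add, hx, hy]

end coords

section main
variable (R : Type*) [CommRing R] (n : ℕ) {M N : Type*} [AddCommGroup M] [Module R M]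
  [AddCommGroup N] [Module R N]

lemma detAux_alternating {ι : Type*} [Fintype ι] [DecidableEq ι] (b : Basis ι R (M →ₗ[R] N))
    {x : ⨂[R]^n (M →ₗ[R] N)} (hx : x ∈ symTensors R n (M →ₗ[R] N))
    (m : Fin n → M) {i j : Fin n} (hm : m i = m j) (hij : i ≠ j) :
    detAux R n x (PiTensorProduct.tprod R m) = 0 := by
  classical
  set τ : Equiv.Perm (Fin n) := Equiv.swap i j with hτ
  have hmτ : ∀ k, m (τ k) = m k := by
    intro k
    rcases eq_or_ne k i with rfl | hki
    · simpa [hτ, Equiv.swap_apply_left] using hm.symm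
    rcases eq_or_ne k j with rfl | hkj
    · simpa [hτ, Equiv.swap_apply_right] using hm
    · simp [hτ, Equiv.swap_apply_of_ne_of_ne hki hkj]
  have hc : ∀ w : Fin n → ι, coordT R n b (w ∘ τ) x = coordT R n b w x := by
    intro w
    rw [← coordT_reindex R n b τ w x, hx τ]
  conv_lhs => rw [tensor_decomposition R n b x]
  rw [map_sum, LinearMap.sum_apply]
  refine Finset.sum_involution (fun w _ => w ∘ τ) ?_ ?_ (fun _ _ => Finset.mem_univ _) ?_
  · intro w _
    simp only [map_smul, LinearMap.smul_apply, detAux_tprod_tprod, hc]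
    rw [← smul_add]
    convert smul_zero _
    have : (fun k => (b ((w ∘ τ) k)) (m k))
        = (fun k => (b (w k)) (m k)) ∘ τ := by
      funext k; simp [hmτ k]
    rw [show wedgePure R n (fun k => (b ((w ∘ τ) k)) (m k))
        = wedgePure R n ((fun k => (b (w k)) (m k)) ∘ τ) by rw [this]]
    have hswap := (wedgeAlt R n (M := N)).map_swap (fun k => (b (w k)) (m k)) hij
    simp only [wedgeAlt_apply] at hswap
    rw [hτ] at *
    rw [hswap]
    abel
  · intro w _ hne
    by_contra h
    apply hne
    have hwij : w i = w j := by
      have := congrFun h i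
      simpa [hτ, Equiv.swap_apply_left] using this.symm
    have : wedgePure R n (fun k => (b (w k)) (m k)) = 0 := by
      have := (wedgeAlt R n (M := N)).map_eq_zero_of_eq
        (fun k => (b (w k)) (m k))
        (show b (w i) (m i) = b (w j) (m j) by rw [hwij, hm]) hij
      simpa using this
    simp [this]
  · intro w _
    funext k
    simp [hτ, Equiv.swap_apply_self]

variable (M N) in
/-- The alternating map attached to a symmetric tensor of homs. -/
noncomputable def altOf (bM : Basis (Fin n) R M) (bN : Basis (Fin n) R N)
    (x : symTensors R n (M →ₗ[R] N)) : M [⋀^Fin n]→ₗ[R] (⋀[R]^n N) :=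
  { toMultilinearMap := (detAux R n (x : ⨂[R]^n (M →ₗ[R] N))).compMultilinearMap
      (PiTensorProduct.tprod R)
    map_eq_zero_of_eq' := fun v i j h hij =>
      detAux_alternating R n (bM.linearMap bN) x.2 v h hij }

@[simp] lemma altOf_apply (bM : Basis (Fin n) R M) (bN : Basis (Fin n) R N)
    (x : symTensors R n (M →ₗ[R] N)) (m : Fin n → M) :
    altOf R n M N bM bN x m = detAux R n (x : ⨂[R]^n (M →ₗ[R] N))
      (PiTensorProduct.tprod R m) := rfl

end main

section detmap
variable (R : Type*) [CommRing R] (n : ℕ) {M N : Type*} [AddCommGroup M] [Module R M]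
  [AddCommGroup N] [Module R N]

variable (M N) in
/-- The determinant map on symmetric tensors. -/
noncomputable def detMap (bM : Basis (Fin n) R M) (bN : Basis (Fin n) R N) :
    symTensors R n (M →ₗ[R] N) →ₗ[R] ((⋀[R]^n M) →ₗ[R] (⋀[R]^n N)) where
  toFun x := (ExteriorAlgebra.liftAlternating
      (Pi.single n (altOf R n M N bM bN x))).domRestrict (⋀[R]^n M)
  map_add' x y := by
    have hadd : altOf R n M N bM bN (x + y)
        = altOf R n M N bM bN x + altOf R n M N bM bN y := by
      ext m
      simp [altOf]
      rfl
    ext z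
    simp only [LinearMap.domRestrict_apply, hadd, Pi.single_add, map_add, LinearMap.add_apply]
    rfl
  map_smul' r x := by
    have hsmul : altOf R n M N bM bN (r • x) = r • altOf R n M N bM bN x := by
      ext m
      simp [altOf]
      rfl
    ext z
    simp only [LinearMap.domRestrict_apply, hsmul, Pi.single_smul, map_smul,
      LinearMap.smul_apply, RingHom.id_apply]
    rfl

lemma detMap_wedgePure (bM : Basis (Fin n) R M) (bN : Basis (Fin n) R N)
    (x : symTensors R n (M →ₗ[R] N)) (m : Fin n → M) :
    detMap R n M N bM bN x (wedgePure R n m)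
      = detAux R n (x : ⨂[R]^n (M →ₗ[R] N)) (PiTensorProduct.tprod R m) := by
  have h1 : ((wedgePure R n m : ⋀[R]^n M) : ExteriorAlgebra R M)
      = ExteriorAlgebra.ιMulti R n m := rfl
  simp only [detMap, LinearMap.coe_mk, AddHom.coe_mk, LinearMap.domRestrict_apply, h1,
    ExteriorAlgebra.liftAlternating_apply_ιMulti, Pi.single_eq_same, altOf_apply]

end detmap

theorem det_welldefined_on_symTensors
    (R : Type*) [CommRing R] (n : ℕ)
    (M : Type*) [AddCommGroup M] [Module R M]
    (N : Type*) [AddCommGroup N] [Module R N]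
    (bM : Basis (Fin n) R M) (bN : Basis (Fin n) R N) :
    ∃ D : symTensors R n (M →ₗ[R] N) →ₗ[R] ((⋀[R]^n M) →ₗ[R] (⋀[R]^n N)),
      (∀ (φ : Fin n → (M →ₗ[R] N)) (h : (⨂ₜ[R] i, φ i) ∈ symTensors R n (M →ₗ[R] N))
          (m : Fin n → M),
        D ⟨⨂ₜ[R] i, φ i, h⟩ (wedgePure R n m) = wedgePure R n (fun i => φ i (m i))) ∧
      (∀ (ψ : M →ₗ[R] N) (h : (⨂ₜ[R] _i : Fin n, ψ) ∈ symTensors R n (M →ₗ[R] N))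
          (m : Fin n → M),
        D ⟨⨂ₜ[R] _i : Fin n, ψ, h⟩ (wedgePure R n m) = wedgePure R n (fun i => ψ (m i))) := by
  refine ⟨detMap R n M N bM bN, fun φ h m => ?_, fun ψ h m => ?_⟩
  · rw [detMap_wedgePure]
    simp
  · rw [detMap_wedgePure]
    simp
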